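/- For every ε ∈ (−1,1), every j₀ ∈ ℤ, and every real z with |z| < 1, the generating function of the probabilities of being at the origin when starting from site j₀ satisfies (Σ_{n≥0} P_n(0|j₀) z^n) · (Σ_{n≥0} (ε/2)_n ((ε+1)/2)_n / (n!)² · z^{2n}) = (z/2)^{|j₀|} · ((1+ε)_{|j₀|} / |j₀|!) · Σ_{n≥0} ((1+ε+|j₀|)/2)_n ((2+ε+|j₀|)/2)_n / ((|j₀|+1)_n n!) · z^{2n}. -/

import Mathlib

/-- Probability of a right step in the Gillis walk. -/
noncomputable def gR (ε : ℝ) (j : ℤ) : ℝ :=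
  if j = 0 then 1 / 2 else (1 - ε / (j : ℝ)) / 2

/-- Probability of a left step in the Gillis walk. -/
noncomputable def gL (ε : ℝ) (j : ℤ) : ℝ :=
  if j = 0 then 1 / 2 else (1 + ε / (j : ℝ)) / 2

/-- Occupation probabilities of the Gillis walk started at site `j₀`:
`gPfrom ε j₀ n j` is the probability of being at site `j` after `n` steps. -/
noncomputable def gPfrom (ε : ℝ) (j₀ : ℤ) : ℕ → ℤ → ℝ
  | 0, j => if j = j₀ then 1 else 0
  | n + 1, j => gR ε (j - 1) * gPfrom ε j₀ n (j - 1) + gL ε (j + 1) * gPfrom ε j₀ n (j + 1)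

/-- Pochhammer symbol `(x)ₙ = x (x+1) ⋯ (x+n-1)`. -/
noncomputable def poch (x : ℝ) (n : ℕ) : ℝ := ∏ i ∈ Finset.range n, (x + i)

open Finset

namespace GillisAux

/-! ### Pochhammer lemmas -/

lemma poch_zero (x : ℝ) : poch x 0 = 1 := by simp [poch]

lemma poch_one (x : ℝ) : poch x 1 = x := by simp [poch]

lemma poch_succ (x : ℝ) (k : ℕ) : poch x (k + 1) = poch x k * (x + k) := by
  simp [poch, Finset.prod_range_succ]

lemma poch_succ' (x : ℝ) (k : ℕ) : poch x (k + 1) = x * poch (x + 1) k := by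
  rw [poch, Finset.prod_range_succ']
  rw [mul_comm, poch]
  congr 1
  · norm_num
  · refine Finset.prod_congr rfl fun i _ => ?_
    push_cast; ring

lemma poch_pos {x : ℝ} (hx : 0 < x) (k : ℕ) : 0 < poch x k := by
  refine Finset.prod_pos fun i _ => by positivity

lemma poch_ne_zero {x : ℝ} (hx : 0 < x) (k : ℕ) : poch x k ≠ 0 := (poch_pos hx k).ne'

lemma poch_one_eq_factorial (k : ℕ) : poch 1 k = (k.factorial : ℝ) := by
  induction k with
  | zero => simp [poch_zero]
  | succ k ih => rw [poch_succ, ih, Nat.factorial_succ]; push_cast; ring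

lemma poch_two_eq_factorial (k : ℕ) : poch 2 k = ((k + 1).factorial : ℝ) := by
  induction k with
  | zero => simp [poch_zero]
  | succ k ih =>
      rw [poch_succ, ih, show k + 1 + 1 = k + 2 from rfl, Nat.factorial_succ (k + 1)]
      push_cast; ring

lemma abs_poch_le {x y : ℝ} (h : |x| ≤ y) (k : ℕ) : |poch x k| ≤ poch y k := by
  rw [poch, poch, Finset.abs_prod]
  refine Finset.prod_le_prod (fun i _ => abs_nonneg _) fun i _ => ?_
  calc |x + (i : ℝ)| ≤ |x| + (i : ℝ) := by
        have := abs_nonneg x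
        have : |x + (i:ℝ)| ≤ |x| + |(i:ℝ)| := abs_add_le _ _
        simpa [abs_of_nonneg (show (0:ℝ) ≤ (i:ℝ) by positivity)] using this
    _ ≤ y + i := by linarith

lemma poch_le_poch {x y : ℝ} (hx : 0 ≤ x) (h : x ≤ y) (k : ℕ) : poch x k ≤ poch y k := by
  refine Finset.prod_le_prod (fun i _ => by positivity) fun i _ => by linarith

/-- Shift identity: `(x)_{k+1} (x+1+k) = x (x+1) (x+2)_k`. -/
lemma poch_shift (x : ℝ) (k : ℕ) :
    poch x (k + 1) * (x + 1 + k) = x * (x + 1) * poch (x + 2) k := by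
  have h1 : poch x (k + 1) = x * poch (x + 1) k := poch_succ' x k
  have h2 : poch (x + 1) k * (x + 1 + k) = poch (x + 1) (k + 1) := (poch_succ _ _).symm
  have h3 : poch (x + 1) (k + 1) = (x + 1) * poch (x + 2) k := by
    have := poch_succ' (x + 1) k
    simpa [add_assoc, show x + 1 + 1 = x + 2 by ring] using this
  calc poch x (k + 1) * (x + 1 + k) = x * (poch (x + 1) k * (x + 1 + k)) := by rw [h1]; ring
    _ = x * poch (x + 1) (k + 1) := by rw [h2]
    _ = x * (x + 1) * poch (x + 2) k := by rw [h3]; ring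

/-! ### Coefficient definitions -/

/-- Coefficients of `₂F₁(ε/2, (ε+1)/2; 1; ·)`. -/
noncomputable def gk (ε : ℝ) (k : ℕ) : ℝ :=
  poch (ε / 2) k * poch ((ε + 1) / 2) k / ((k.factorial : ℝ)) ^ 2

/-- Coefficients of the same series as a power series in `z`. -/
noncomputable def gc (ε : ℝ) (N : ℕ) : ℝ := if N % 2 = 0 then gk ε (N / 2) else 0

/-- Coefficients of the hypergeometric series on the right-hand side. -/
noncomputable def uu (ε : ℝ) (m k : ℕ) : ℝ :=
  poch ((1 + ε + m) / 2) k * poch ((2 + ε + m) / 2) k /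
    (poch ((m : ℝ) + 1) k * (k.factorial : ℝ))

/-- Full right-hand-side coefficient (before the `z` powers). -/
noncomputable def Bc (ε : ℝ) (m k : ℕ) : ℝ :=
  (1 / 2) ^ m * poch (1 + ε) m / (m.factorial : ℝ) * uu ε m k

/-- Candidate coefficients of `F_j(z) G(z)`. -/
noncomputable def cc (ε : ℝ) (j : ℤ) (N : ℕ) : ℝ :=
  if j.natAbs ≤ N ∧ (N - j.natAbs) % 2 = 0 then Bc ε j.natAbs ((N - j.natAbs) / 2) else 0

/-- Actual coefficients of `F_j(z) G(z)` (Cauchy product). -/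
noncomputable def bb (ε : ℝ) (j : ℤ) (N : ℕ) : ℝ :=
  ∑ i ∈ Finset.range (N + 1), gPfrom ε j i 0 * gc ε (N - i)

/-! ### Key hypergeometric contiguous identities -/

variable {ε : ℝ}

lemma key1 (hε : -1 < ε) (m k : ℕ) :
    Bc ε (m + 1) (k + 1) =
      ((m : ℝ) + 1 - ε) / (2 * ((m : ℝ) + 1)) * Bc ε (m + 2) k +
      ((m : ℝ) + 1 + ε) / (2 * ((m : ℝ) + 1)) * Bc ε m (k + 1) := by
  have hm0 : (0 : ℝ) ≤ (m : ℝ) := Nat.cast_nonneg m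
  have hk0 : (0 : ℝ) ≤ (k : ℝ) := Nat.cast_nonneg k
  have hε' : (0 : ℝ) < 1 + ε := by linarith
  have hF : ((m.factorial : ℝ)) ≠ 0 := Nat.cast_ne_zero.2 m.factorial_ne_zero
  have hG : ((k.factorial : ℝ)) ≠ 0 := Nat.cast_ne_zero.2 k.factorial_ne_zero
  have hq : (0 : ℝ) < poch ((m : ℝ) + 3) k := poch_pos (by positivity) k
  have hq' : poch ((m : ℝ) + 3) k ≠ 0 := hq.ne'
  have hMk : ((m : ℝ) + 2 + (k : ℝ)) ≠ 0 := by positivity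
  have hm1 : ((m : ℝ) + 1) ≠ 0 := by positivity
  have hm2 : ((m : ℝ) + 2) ≠ 0 := by positivity
  have hα : ((2 + ε + (m : ℝ)) / 2) ≠ 0 := by
    have : (0:ℝ) < 2 + ε + (m:ℝ) := by linarith
    positivity
  have hs : poch ((m : ℝ) + 1) (k + 1)
      = ((m : ℝ) + 1) * ((m : ℝ) + 2) * poch ((m : ℝ) + 3) k / ((m : ℝ) + 2 + (k : ℝ)) := by
    rw [eq_div_iff hMk]
    have h := poch_shift ((m : ℝ) + 1) k
    rw [show (m : ℝ) + 1 + 1 = (m : ℝ) + 2 by ring,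
      show (m : ℝ) + 1 + 2 = (m : ℝ) + 3 by ring] at h
    linarith [h]
  simp only [Bc, uu]
  rw [show m + 2 = m + 1 + 1 from rfl]
  simp only [Nat.factorial_succ, pow_succ, poch_succ (1 + ε)]
  push_cast
  rw [show (1 + ε + ((m : ℝ) + 1)) / 2 = (2 + ε + (m : ℝ)) / 2 by ring,
    show (2 + ε + ((m : ℝ) + 1)) / 2 = (3 + ε + (m : ℝ)) / 2 by ring,
    show (1 + ε + ((m : ℝ) + 1 + 1)) / 2 = (3 + ε + (m : ℝ)) / 2 by ring,
    show (2 + ε + ((m : ℝ) + 1 + 1)) / 2 = (4 + ε + (m : ℝ)) / 2 by ring,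
    show (m : ℝ) + 1 + 1 + 1 = (m : ℝ) + 3 by ring,
    show (m : ℝ) + 1 + 1 = (m : ℝ) + 2 by ring]
  simp only [poch_succ' ((2 + ε + (m : ℝ)) / 2) k, poch_succ ((3 + ε + (m : ℝ)) / 2) k,
    poch_succ' ((1 + ε + (m : ℝ)) / 2) k, poch_succ' ((m : ℝ) + 2) k]
  rw [show (2 + ε + (m : ℝ)) / 2 + 1 = (4 + ε + (m : ℝ)) / 2 by ring,
    show (1 + ε + (m : ℝ)) / 2 + 1 = (3 + ε + (m : ℝ)) / 2 by ring,
    show (m : ℝ) + 2 + 1 = (m : ℝ) + 3 by ring, hs]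
  field_simp
  ring

lemma key2 (hε : -1 < ε) (m : ℕ) :
    Bc ε (m + 1) 0 = ((m : ℝ) + 1 + ε) / (2 * ((m : ℝ) + 1)) * Bc ε m 0 := by
  have hF : ((m.factorial : ℝ)) ≠ 0 := Nat.cast_ne_zero.2 m.factorial_ne_zero
  have hm : ((m : ℝ) + 1) ≠ 0 := by positivity
  simp only [Bc, uu, poch_zero, Nat.factorial_zero, Nat.factorial_succ, poch_succ, pow_succ]
  push_cast
  field_simp
  ring

lemma key3 (hε : -1 < ε) (k : ℕ) :
    Bc ε 0 (k + 1) = gk ε (k + 1) + Bc ε 1 k := by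
  have hG : ((k.factorial : ℝ)) ≠ 0 := Nat.cast_ne_zero.2 k.factorial_ne_zero
  have hG1 : (((k + 1).factorial : ℝ)) ≠ 0 := Nat.cast_ne_zero.2 (k + 1).factorial_ne_zero
  simp only [Bc, uu, gk, pow_zero, pow_one, Nat.factorial_zero, Nat.factorial_one, poch_zero,
    poch_one]
  push_cast
  rw [show ((1 : ℝ) + ε + 0) / 2 = (1 + ε) / 2 by ring,
    show ((2 : ℝ) + ε + 0) / 2 = (2 + ε) / 2 by ring,
    show ((1 : ℝ) + ε + 1) / 2 = (2 + ε) / 2 by ring,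
    show ((2 : ℝ) + ε + 1) / 2 = (3 + ε) / 2 by ring,
    show ((0 : ℝ) + 1) = 1 by ring, show ((1 : ℝ) + 1) = 2 by ring,
    poch_one_eq_factorial, poch_two_eq_factorial,
    poch_succ' ((1 + ε) / 2) k,
    poch_succ ((2 + ε) / 2) k,
    poch_succ' (ε / 2) k,
    poch_succ' ((ε + 1) / 2) k,
    show (1 + ε) / 2 + 1 = (3 + ε) / 2 by ring,
    show ε / 2 + 1 = (2 + ε) / 2 by ring,
    show (ε + 1) / 2 + 1 = (3 + ε) / 2 by ring,
    Nat.factorial_succ]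
  push_cast
  field_simp
  ring

/-! ### Recursion for the candidate coefficients -/

lemma cc_neg (j : ℤ) (N : ℕ) : cc ε (-j) N = cc ε j N := by simp [cc]

lemma cc_rec_nat (hε : -1 < ε) (m : ℕ) (N : ℕ) :
    cc ε (m : ℤ) (N + 1) =
      (if (m : ℤ) = 0 then gc ε (N + 1) else 0) +
        gR ε (m : ℤ) * cc ε ((m : ℤ) + 1) N + gL ε (m : ℤ) * cc ε ((m : ℤ) - 1) N := by
  cases m with
  | zero =>
    have h0 : ((0 : ℕ) : ℤ) = (0 : ℤ) := rfl
    rw [h0]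
    have hR0 : gR ε 0 = 1 / 2 := by simp [gR]
    have hL0 : gL ε 0 = 1 / 2 := by simp [gL]
    have hneg : ((0 : ℤ) - 1) = -(1 : ℤ) := by ring
    rw [if_pos rfl, hR0, hL0, hneg, cc_neg, show (0 : ℤ) + 1 = 1 from rfl]
    by_cases hN : N % 2 = 1
    · obtain ⟨K, rfl⟩ : ∃ K, N = 2 * K + 1 := ⟨N / 2, by omega⟩
      simp only [cc, gc, Int.natAbs_zero, Int.natAbs_one]
      rw [if_pos (by omega : 0 ≤ 2 * K + 1 + 1 ∧ (2 * K + 1 + 1 - 0) % 2 = 0),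
        if_pos (by omega : (2 * K + 1 + 1) % 2 = 0),
        if_pos (by omega : 1 ≤ 2 * K + 1 ∧ (2 * K + 1 - 1) % 2 = 0),
        show (2 * K + 1 + 1 - 0) / 2 = K + 1 by omega,
        show (2 * K + 1 + 1) / 2 = K + 1 by omega,
        show (2 * K + 1 - 1) / 2 = K by omega]
      have := key3 (ε := ε) hε K
      linarith [this]
    · simp only [cc, gc, Int.natAbs_zero, Int.natAbs_one]
      rw [if_neg (by omega), if_neg (by omega), if_neg (by omega)]
      norm_num
  | succ m =>
    have hgR : gR ε ((m + 1 : ℕ) : ℤ) = ((m : ℝ) + 1 - ε) / (2 * ((m : ℝ) + 1)) := by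
      unfold gR
      rw [if_neg (by omega)]
      push_cast
      rw [div_eq_div_iff (by norm_num) (by positivity)]
      field_simp
    have hgL : gL ε ((m + 1 : ℕ) : ℤ) = ((m : ℝ) + 1 + ε) / (2 * ((m : ℝ) + 1)) := by
      unfold gL
      rw [if_neg (by omega)]
      push_cast
      rw [div_eq_div_iff (by norm_num) (by positivity)]
      field_simp
    rw [if_neg (by omega), hgR, hgL,
      show ((m + 1 : ℕ) : ℤ) + 1 = ((m + 2 : ℕ) : ℤ) by push_cast; ring,
      show ((m + 1 : ℕ) : ℤ) - 1 = (m : ℤ) by push_cast; ring]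
    simp only [cc, Int.natAbs_natCast]
    by_cases hA : m ≤ N ∧ (N - m) % 2 = 0
    · obtain ⟨K, rfl⟩ : ∃ K, N = m + 2 * K := ⟨(N - m) / 2, by omega⟩
      cases K with
      | zero =>
        rw [if_pos (by omega : m + 1 ≤ m + 2 * 0 + 1 ∧ (m + 2 * 0 + 1 - (m + 1)) % 2 = 0),
          if_neg (by omega : ¬(m + 2 ≤ m + 2 * 0 ∧ (m + 2 * 0 - (m + 2)) % 2 = 0)),
          if_pos (by omega : m ≤ m + 2 * 0 ∧ (m + 2 * 0 - m) % 2 = 0),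
          show (m + 2 * 0 + 1 - (m + 1)) / 2 = 0 by omega,
          show (m + 2 * 0 - m) / 2 = 0 by omega]
        have := key2 (ε := ε) hε m
        linarith [this]
      | succ k =>
        rw [if_pos (by omega : m + 1 ≤ m + 2 * (k + 1) + 1 ∧
              (m + 2 * (k + 1) + 1 - (m + 1)) % 2 = 0),
          if_pos (by omega : m + 2 ≤ m + 2 * (k + 1) ∧ (m + 2 * (k + 1) - (m + 2)) % 2 = 0),
          if_pos (by omega : m ≤ m + 2 * (k + 1) ∧ (m + 2 * (k + 1) - m) % 2 = 0),
          show (m + 2 * (k + 1) + 1 - (m + 1)) / 2 = k + 1 by omega,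
          show (m + 2 * (k + 1) - (m + 2)) / 2 = k by omega,
          show (m + 2 * (k + 1) - m) / 2 = k + 1 by omega]
        have := key1 (ε := ε) hε m k
        linarith [this]
    · rw [if_neg (by omega), if_neg (by omega), if_neg (by omega)]
      norm_num

lemma gR_neg (ε : ℝ) (j : ℤ) : gR ε (-j) = gL ε j := by
  unfold gR gL
  by_cases h : j = 0
  · subst h; norm_num
  · rw [if_neg (by omega), if_neg h]
    push_cast
    rw [div_neg]
    ring

lemma gL_neg (ε : ℝ) (j : ℤ) : gL ε (-j) = gR ε j := by
  unfold gR gL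
  by_cases h : j = 0
  · subst h; norm_num
  · rw [if_neg (by omega), if_neg h]
    push_cast
    rw [div_neg]
    ring

lemma cc_rec (hε : -1 < ε) (j : ℤ) (N : ℕ) :
    cc ε j (N + 1) =
      (if j = 0 then gc ε (N + 1) else 0) +
        gR ε j * cc ε (j + 1) N + gL ε j * cc ε (j - 1) N := by
  rcases le_or_gt 0 j with hj | hj
  · obtain ⟨m, rfl⟩ := Int.eq_ofNat_of_zero_le hj
    exact cc_rec_nat hε m N
  · obtain ⟨m, hm⟩ := Int.eq_ofNat_of_zero_le (by omega : (0 : ℤ) ≤ -j)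
    have hrec := cc_rec_nat (ε := ε) hε m N
    rw [← hm] at hrec
    have e1 : cc ε j (N + 1) = cc ε (-j) (N + 1) := (cc_neg j (N + 1)).symm
    have e2 : cc ε (j + 1) N = cc ε (-j - 1) N := by
      rw [show -j - 1 = -(j + 1) by ring, cc_neg]
    have e3 : cc ε (j - 1) N = cc ε (-j + 1) N := by
      rw [show -j + 1 = -(j - 1) by ring, cc_neg]
    have e4 : gR ε j = gL ε (-j) := (gL_neg ε j).symm
    have e5 : gL ε j = gR ε (-j) := (gR_neg ε j).symm
    rw [e1, e2, e3, e4, e5, if_neg (by omega), hrec, if_neg (by omega)]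
    ring

/-! ### Walk lemmas -/

lemma gPfrom_zero (ε : ℝ) (j₀ j : ℤ) : gPfrom ε j₀ 0 j = if j = j₀ then 1 else 0 := rfl

lemma gPfrom_succ (ε : ℝ) (j₀ : ℤ) (n : ℕ) (j : ℤ) :
    gPfrom ε j₀ (n + 1) j
      = gR ε (j - 1) * gPfrom ε j₀ n (j - 1) + gL ε (j + 1) * gPfrom ε j₀ n (j + 1) := rfl

lemma gPfrom_back (ε : ℝ) : ∀ (n : ℕ) (j t : ℤ),
    gPfrom ε j (n + 1) t = gR ε j * gPfrom ε (j + 1) n t + gL ε j * gPfrom ε (j - 1) n t := by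
  intro n
  induction n with
  | zero =>
    intro j t
    rw [gPfrom_succ]
    simp only [gPfrom_zero]
    rcases eq_or_ne t (j + 1) with rfl | h1
    · rw [show j + 1 - 1 = j from by ring]
      rw [if_pos rfl, if_neg (by omega), if_pos rfl, if_neg (by omega)]
      ring
    · rcases eq_or_ne t (j - 1) with rfl | h2
      · rw [show j - 1 + 1 = j from by ring]
        rw [if_neg (by omega), if_pos rfl, if_neg (by omega), if_pos rfl]
        ring
      · rw [if_neg (by omega), if_neg (by omega), if_neg (by omega), if_neg (by omega)]
        ring
  | succ n ih =>
    intro j t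
    rw [show n + 1 + 1 = (n + 1) + 1 from rfl, gPfrom_succ, ih j (t - 1), ih j (t + 1),
      gPfrom_succ ε (j + 1) n t, gPfrom_succ ε (j - 1) n t]
    ring

lemma abs_eps_div_le (hε1 : -1 < ε) (hε2 : ε < 1) {j : ℤ} (hj : j ≠ 0) :
    |ε / (j : ℝ)| < 1 := by
  have h1 : (1 : ℝ) ≤ |(j : ℝ)| := by
    rw [← Int.cast_abs]
    exact_mod_cast Int.one_le_abs (by omega)
  have h2 : |ε| < 1 := abs_lt.2 ⟨hε1, hε2⟩
  rw [abs_div]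
  calc |ε| / |(j : ℝ)| ≤ |ε| / 1 := by
        apply div_le_div_of_nonneg_left (abs_nonneg ε) one_pos h1
    _ = |ε| := by ring
    _ < 1 := h2

lemma gR_nonneg (hε1 : -1 < ε) (hε2 : ε < 1) (j : ℤ) : 0 ≤ gR ε j := by
  unfold gR; split_ifs with h
  · norm_num
  · have := (abs_lt.1 (abs_eps_div_le hε1 hε2 h)).2
    linarith

lemma gL_nonneg (hε1 : -1 < ε) (hε2 : ε < 1) (j : ℤ) : 0 ≤ gL ε j := by
  unfold gL; split_ifs with h
  · norm_num
  · have := (abs_lt.1 (abs_eps_div_le hε1 hε2 h)).1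
    linarith

lemma gRL (ε : ℝ) (j : ℤ) : gR ε j + gL ε j = 1 := by
  unfold gR gL; split_ifs with h
  · norm_num
  · field_simp; ring

lemma gPfrom_nonneg (hε1 : -1 < ε) (hε2 : ε < 1) (j : ℤ) :
    ∀ (n : ℕ) (t : ℤ), 0 ≤ gPfrom ε j n t := by
  intro n
  induction n with
  | zero => intro t; rw [gPfrom_zero]; split_ifs <;> norm_num
  | succ n ih =>
    intro t
    rw [gPfrom_succ]
    have := ih (t - 1); have := ih (t + 1)
    have := gR_nonneg hε1 hε2 (t - 1); have := gL_nonneg hε1 hε2 (t + 1)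
    positivity

lemma gPfrom_vanish (ε : ℝ) (j : ℤ) :
    ∀ (n : ℕ) (t : ℤ), n < (t - j).natAbs → gPfrom ε j n t = 0 := by
  intro n
  induction n with
  | zero => intro t ht; rw [gPfrom_zero, if_neg (by omega)]
  | succ n ih =>
    intro t ht
    rw [gPfrom_succ, ih (t - 1) (by omega), ih (t + 1) (by omega)]
    ring

lemma shift_sum (f : ℤ → ℝ) (a b c : ℤ) :
    ∑ t ∈ Finset.Icc (a + c) (b + c), f t = ∑ t ∈ Finset.Icc a b, f (t + c) := by
  rw [← Finset.map_add_right_Icc, Finset.sum_map]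
  rfl

lemma gPfrom_sum_one (hε1 : -1 < ε) (hε2 : ε < 1) (j : ℤ) (n : ℕ) :
    ∑ t ∈ Finset.Icc (j - n) (j + n), gPfrom ε j n t = 1 := by
  induction n with
  | zero => simp [gPfrom_zero]
  | succ n ih =>
    have hv : ∀ t : ℤ, t ∈ Finset.Icc (j - (n : ℤ) - 2) (j + n) →
        t ∉ Finset.Icc (j - (n : ℤ)) (j + n) → gPfrom ε j n t = 0 := by
      intro t h1 h2
      simp only [Finset.mem_Icc] at h1 h2
      exact gPfrom_vanish ε j n t (by omega)
    have hv' : ∀ t : ℤ, t ∈ Finset.Icc (j - (n : ℤ)) (j + n + 2) →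
        t ∉ Finset.Icc (j - (n : ℤ)) (j + n) → gPfrom ε j n t = 0 := by
      intro t h1 h2
      simp only [Finset.mem_Icc] at h1 h2
      exact gPfrom_vanish ε j n t (by omega)
    have e1 : j - ((n : ℤ) + 1) = (j - n - 2) + 1 := by ring
    have e2 : j + ((n : ℤ) + 1) = (j + n) + 1 := by ring
    have e3 : j - ((n : ℤ) + 1) = (j - n) + (-1) := by ring
    have e4 : j + ((n : ℤ) + 1) = (j + n + 2) + (-1) := by ring
    calc ∑ t ∈ Finset.Icc (j - ((n : ℕ) + 1 : ℕ)) (j + ((n : ℕ) + 1 : ℕ)),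
          gPfrom ε j (n + 1) t
        = ∑ t ∈ Finset.Icc (j - ((n : ℤ) + 1)) (j + ((n : ℤ) + 1)),
            (gR ε (t - 1) * gPfrom ε j n (t - 1) + gL ε (t + 1) * gPfrom ε j n (t + 1)) := by
          push_cast
          exact Finset.sum_congr rfl fun t _ => gPfrom_succ ε j n t
      _ = (∑ t ∈ Finset.Icc (j - ((n : ℤ) + 1)) (j + ((n : ℤ) + 1)),
              gR ε (t - 1) * gPfrom ε j n (t - 1))
          + ∑ t ∈ Finset.Icc (j - ((n : ℤ) + 1)) (j + ((n : ℤ) + 1)),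
              gL ε (t + 1) * gPfrom ε j n (t + 1) := Finset.sum_add_distrib
      _ = (∑ t ∈ Finset.Icc (j - (n : ℤ) - 2) (j + n), gR ε t * gPfrom ε j n t)
          + ∑ t ∈ Finset.Icc (j - (n : ℤ)) (j + n + 2), gL ε t * gPfrom ε j n t := by
          congr 1
          · rw [e1, e2, shift_sum (fun t => gR ε (t - 1) * gPfrom ε j n (t - 1))
              (j - (n : ℤ) - 2) (j + n) 1]
            exact Finset.sum_congr rfl fun t _ => by rw [show t + 1 - 1 = t from by ring]
          · rw [e3, e4, shift_sum (fun t => gL ε (t + 1) * gPfrom ε j n (t + 1))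
              (j - (n : ℤ)) (j + n + 2) (-1)]
            exact Finset.sum_congr rfl fun t _ => by rw [show t + -1 + 1 = t from by ring]
      _ = (∑ t ∈ Finset.Icc (j - (n : ℤ)) (j + n), gR ε t * gPfrom ε j n t)
          + ∑ t ∈ Finset.Icc (j - (n : ℤ)) (j + n), gL ε t * gPfrom ε j n t := by
          congr 1
          · exact (Finset.sum_subset
              (Finset.Icc_subset_Icc (by omega) le_rfl)
              (fun t h1 h2 => by rw [hv t h1 h2, mul_zero])).symm
          · exact (Finset.sum_subset
              (Finset.Icc_subset_Icc le_rfl (by omega))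
              (fun t h1 h2 => by rw [hv' t h1 h2, mul_zero])).symm
      _ = ∑ t ∈ Finset.Icc (j - (n : ℤ)) (j + n), gPfrom ε j n t := by
          rw [← Finset.sum_add_distrib]
          exact Finset.sum_congr rfl fun t _ => by
            rw [← add_mul, gRL, one_mul]
      _ = 1 := ih

lemma gPfrom_le_one (hε1 : -1 < ε) (hε2 : ε < 1) (j : ℤ) (n : ℕ) (t : ℤ) :
    gPfrom ε j n t ≤ 1 := by
  by_cases h : t ∈ Finset.Icc (j - (n : ℤ)) (j + n)
  · have := Finset.single_le_sum (f := fun s => gPfrom ε j n s)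
      (fun s _ => gPfrom_nonneg hε1 hε2 j n s) h
    rw [gPfrom_sum_one hε1 hε2 j n] at this
    exact this
  · simp only [Finset.mem_Icc] at h
    rw [gPfrom_vanish ε j n t (by omega)]
    norm_num

/-! ### The coefficient identity -/

lemma gc_zero (ε : ℝ) : gc ε 0 = 1 := by
  simp [gc, gk, poch_zero]

lemma Bc_zero_zero : Bc ε 0 0 = 1 := by
  simp [Bc, uu, poch_zero]

lemma bb_eq_cc (hε1 : -1 < ε) (hε2 : ε < 1) : ∀ (N : ℕ) (j : ℤ), bb ε j N = cc ε j N := by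
  intro N
  induction N with
  | zero =>
    intro j
    rw [bb, Finset.sum_range_one, gPfrom_zero, gc_zero, cc]
    by_cases h : j = 0
    · subst h
      rw [if_pos rfl, if_pos (by simp)]
      simp [Bc_zero_zero]
    · rw [if_neg (by omega), if_neg (by simp; omega)]
      ring
  | succ N ih =>
    intro j
    have hsplit : bb ε j (N + 1)
        = (if (0 : ℤ) = j then (1 : ℝ) else 0) * gc ε (N + 1)
          + gR ε j * bb ε (j + 1) N + gL ε j * bb ε (j - 1) N := by
      rw [bb, Finset.sum_range_succ']
      have hcong : ∀ i ∈ Finset.range (N + 1),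
          gPfrom ε j (i + 1) 0 * gc ε (N + 1 - (i + 1))
            = gR ε j * (gPfrom ε (j + 1) i 0 * gc ε (N - i))
              + gL ε j * (gPfrom ε (j - 1) i 0 * gc ε (N - i)) := by
        intro i hi
        rw [gPfrom_back, show N + 1 - (i + 1) = N - i by omega]
        ring
      rw [Finset.sum_congr rfl hcong, Finset.sum_add_distrib, ← Finset.mul_sum, ← Finset.mul_sum]
      rw [gPfrom_zero, bb, bb]
      simp only [Nat.sub_zero]
      ring
    rw [hsplit, ih (j + 1), ih (j - 1), cc_rec hε1 j N]
    have hif : (if (0 : ℤ) = j then (1 : ℝ) else 0) * gc ε (N + 1)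
        = (if j = 0 then gc ε (N + 1) else 0) := by
      by_cases h : j = 0 <;> simp [h, eq_comm]
    rw [hif]

end GillisAux

open GillisAux in
/-- The generating function of the probabilities of being at the origin for the Gillis walk
started at `j₀`, stated multiplicatively in terms of hypergeometric series. -/
theorem gillis_generating_function_from (ε : ℝ) (hε : ε ∈ Set.Ioo (-1 : ℝ) 1)
    (j₀ : ℤ) (z : ℝ) (hz : |z| < 1) :
    (∑' n : ℕ, gPfrom ε j₀ n 0 * z ^ n) *
      (∑' n : ℕ, poch (ε / 2) n * poch ((ε + 1) / 2) n / ((n.factorial : ℝ)) ^ 2 * z ^ (2 * n)) =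
    (z / 2) ^ j₀.natAbs * (poch (1 + ε) j₀.natAbs / (j₀.natAbs.factorial : ℝ)) *
      ∑' n : ℕ, poch ((1 + ε + (j₀.natAbs : ℝ)) / 2) n * poch ((2 + ε + (j₀.natAbs : ℝ)) / 2) n /
        (poch ((j₀.natAbs : ℝ) + 1) n * (n.factorial : ℝ)) * z ^ (2 * n) := by
  obtain ⟨hε1, hε2⟩ := hε
  set m := j₀.natAbs with hm
  have hz0 : (0 : ℝ) ≤ |z| := abs_nonneg z
  have hgeo : Summable (fun n : ℕ => |z| ^ n) := summable_geometric_of_lt_one hz0 hz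
  have hsum1 : Summable (fun n : ℕ => ‖gPfrom ε j₀ n 0 * z ^ n‖) := by
    refine Summable.of_nonneg_of_le (fun n => norm_nonneg _) (fun n => ?_) hgeo
    rw [norm_mul, norm_pow, Real.norm_eq_abs, Real.norm_eq_abs]
    have h1 : |gPfrom ε j₀ n 0| ≤ 1 := by
      rw [abs_of_nonneg (gPfrom_nonneg hε1 hε2 j₀ n 0)]
      exact gPfrom_le_one hε1 hε2 j₀ n 0
    calc |gPfrom ε j₀ n 0| * |z| ^ n ≤ 1 * |z| ^ n :=
          mul_le_mul_of_nonneg_right h1 (by positivity)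
      _ = |z| ^ n := one_mul _
  have habs_gc : ∀ N, |gc ε N| ≤ 1 := by
    intro N
    rw [gc]
    split_ifs with h
    · rw [gk, abs_div]
      have hfac : (0 : ℝ) < ((N / 2).factorial : ℝ) ^ 2 := by positivity
      rw [abs_of_pos hfac, div_le_one hfac, abs_mul]
      have he1 : |ε / 2| ≤ 1 := by
        rw [abs_div, abs_of_pos (by norm_num : (0:ℝ) < 2),
          div_le_one (by norm_num : (0:ℝ) < 2)]
        have := abs_lt.2 ⟨hε1, hε2⟩
        linarith
      have he2 : |(ε + 1) / 2| ≤ 1 := by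
        rw [abs_div, abs_of_pos (by norm_num : (0:ℝ) < 2),
          div_le_one (by norm_num : (0:ℝ) < 2)]
        rw [abs_le]
        constructor <;> linarith
      have h1 : |poch (ε / 2) (N / 2)| ≤ poch 1 (N / 2) := abs_poch_le he1 (N / 2)
      have h2 : |poch ((ε + 1) / 2) (N / 2)| ≤ poch 1 (N / 2) := abs_poch_le he2 (N / 2)
      rw [poch_one_eq_factorial] at h1 h2
      calc |poch (ε / 2) (N / 2)| * |poch ((ε + 1) / 2) (N / 2)|
          ≤ ((N / 2).factorial : ℝ) * ((N / 2).factorial : ℝ) :=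
            mul_le_mul h1 h2 (abs_nonneg _) (by positivity)
        _ = ((N / 2).factorial : ℝ) ^ 2 := by ring
    · simp
  have hsum2 : Summable (fun N : ℕ => ‖gc ε N * z ^ N‖) := by
    refine Summable.of_nonneg_of_le (fun n => norm_nonneg _) (fun N => ?_) hgeo
    rw [norm_mul, norm_pow, Real.norm_eq_abs, Real.norm_eq_abs]
    calc |gc ε N| * |z| ^ N ≤ 1 * |z| ^ N :=
          mul_le_mul_of_nonneg_right (habs_gc N) (by positivity)
      _ = |z| ^ N := one_mul _
  have hGf : (∑' n : ℕ, poch (ε / 2) n * poch ((ε + 1) / 2) n / ((n.factorial : ℝ)) ^ 2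
        * z ^ (2 * n)) = ∑' N : ℕ, gc ε N * z ^ N := by
    have hinj : Function.Injective (fun n : ℕ => 2 * n) := fun a b hab => by
      have hab' : 2 * a = 2 * b := hab
      omega
    have hsupp : Function.support (fun N : ℕ => gc ε N * z ^ N)
        ⊆ Set.range (fun n : ℕ => 2 * n) := by
      intro N hN
      have hne : gc ε N ≠ 0 := by
        intro h; exact hN (by simp [h])
      have hNe : N % 2 = 0 := by
        by_contra h; exact hne (by rw [gc, if_neg h])
      exact ⟨N / 2, show 2 * (N / 2) = N by omega⟩
    rw [← Function.Injective.tsum_eq hinj hsupp]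
    apply tsum_congr; intro n
    show poch (ε / 2) n * poch ((ε + 1) / 2) n / ((n.factorial : ℝ)) ^ 2 * z ^ (2 * n)
      = gc ε (2 * n) * z ^ (2 * n)
    rw [gc, if_pos (by omega : 2 * n % 2 = 0), show 2 * n / 2 = n by omega, gk]
  rw [hGf, tsum_mul_tsum_eq_tsum_sum_range_of_summable_norm hsum1 hsum2]
  have hCauchy : ∀ n : ℕ, ∑ k ∈ Finset.range (n + 1),
      gPfrom ε j₀ k 0 * z ^ k * (gc ε (n - k) * z ^ (n - k)) = cc ε j₀ n * z ^ n := by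
    intro n
    rw [← bb_eq_cc hε1 hε2 n j₀, bb, Finset.sum_mul]
    refine Finset.sum_congr rfl fun k hk => ?_
    have hk' : k ≤ n := Nat.lt_succ_iff.mp (Finset.mem_range.mp hk)
    calc gPfrom ε j₀ k 0 * z ^ k * (gc ε (n - k) * z ^ (n - k))
        = gPfrom ε j₀ k 0 * gc ε (n - k) * (z ^ k * z ^ (n - k)) := by ring
      _ = gPfrom ε j₀ k 0 * gc ε (n - k) * z ^ n := by
          rw [← pow_add, Nat.add_sub_cancel' hk']
  rw [tsum_congr hCauchy]
  have hinj2 : Function.Injective (fun k : ℕ => m + 2 * k) := fun a b hab => by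
    have hab' : m + 2 * a = m + 2 * b := hab
    omega
  have hsupp2 : Function.support (fun N : ℕ => cc ε j₀ N * z ^ N)
      ⊆ Set.range (fun k : ℕ => m + 2 * k) := by
    intro N hN
    have hne : cc ε j₀ N ≠ 0 := by
      intro h; exact hN (by simp [h])
    by_cases hcond : j₀.natAbs ≤ N ∧ (N - j₀.natAbs) % 2 = 0
    · exact ⟨(N - m) / 2, show m + 2 * ((N - m) / 2) = N by omega⟩
    · exact absurd (by rw [cc, if_neg hcond]) hne
  rw [← Function.Injective.tsum_eq hinj2 hsupp2]
  have hBc : ∀ k : ℕ, (fun N : ℕ => cc ε j₀ N * z ^ N) ((fun k : ℕ => m + 2 * k) k)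
      = ((1 / 2) ^ m * poch (1 + ε) m / (m.factorial : ℝ) * z ^ m)
          * (uu ε m k * z ^ (2 * k)) := by
    intro k
    show cc ε j₀ (m + 2 * k) * z ^ (m + 2 * k) = _
    rw [cc, ← hm, if_pos (⟨by omega, by omega⟩ : m ≤ m + 2 * k ∧ (m + 2 * k - m) % 2 = 0),
      show (m + 2 * k - m) / 2 = k by omega, Bc, pow_add]
    ring
  rw [tsum_congr hBc, tsum_mul_left]
  have huu : (∑' k : ℕ, uu ε m k * z ^ (2 * k))
      = ∑' n : ℕ, poch ((1 + ε + (m : ℝ)) / 2) n * poch ((2 + ε + (m : ℝ)) / 2) n /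
          (poch ((m : ℝ) + 1) n * (n.factorial : ℝ)) * z ^ (2 * n) :=
    tsum_congr fun n => by rw [uu]
  rw [huu, div_pow]
  rw [one_pow, div_pow]
  ring
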